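/- Let R be an integral domain such that every nonzero nonunit element of R has only finitely many prime ideals minimal over it. Then R is a complete comaximal factorization domain: every nonzero nonunit element of R has a complete comaximal factorization. -/
import Mathlib


/-- A nonzero nonunit `c` of an integral domain is pseudo-irreducible if whenever
`c = a * b` with `aR + bR = R`, then `a` or `b` is a unit. -/
def PseudoIrreducible {R : Type*} [CommRing R] (c : R) : Prop :=
  c ≠ 0 ∧ ¬IsUnit c ∧ ∀ a b : R, c = a * b →
    Ideal.span {a} + Ideal.span {b} = ⊤ → IsUnit a ∨ IsUnit b

/-- A complete comaximal factorization of `d` is a factorization `d = d_1 ⋯ d_n` into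
pairwise comaximal nonzero nonunit pseudo-irreducible factors. -/
def HasCompleteComaximalFactorization {R : Type*} [CommRing R] (a : R) : Prop :=
  ∃ (n : ℕ) (d : Fin n → R), a = ∏ i, d i ∧ (∀ i, PseudoIrreducible (d i)) ∧
    ∀ i j, i ≠ j → Ideal.span {d i} + Ideal.span {d j} = ⊤

lemma minP_subset_aux {R : Type*} [CommRing R] {b c : R}
    (h : Ideal.span {b} ⊔ Ideal.span {c} = ⊤) :
    (Ideal.span {b}).minimalPrimes ⊆ (Ideal.span ({b * c} : Set R)).minimalPrimes := by
  rintro p ⟨⟨hp, hle⟩, hmin⟩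
  have hb : b ∈ p := hle (Ideal.subset_span rfl)
  have hc : c ∉ p := by
    intro hc
    apply hp.ne_top
    rw [eq_top_iff, ← h, sup_le_iff, Ideal.span_singleton_le_iff_mem,
      Ideal.span_singleton_le_iff_mem]
    exact ⟨hb, hc⟩
  refine ⟨⟨hp, ?_⟩, ?_⟩
  · rw [Ideal.span_singleton_le_iff_mem]
    exact Ideal.mul_mem_right _ _ hb
  · rintro q ⟨hq, hqle⟩ hqp
    have hbc : b * c ∈ q := hqle (Ideal.subset_span rfl)
    have hbq : b ∈ q := by
      rcases hq.mem_or_mem hbc with h1 | h1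
      · exact h1
      · exact absurd (hqp h1) hc
    exact hmin ⟨hq, (Ideal.span_singleton_le_iff_mem _).mpr hbq⟩ hqp

lemma minP_mul {R : Type*} [CommRing R] {b c : R}
    (h : Ideal.span {b} ⊔ Ideal.span {c} = ⊤) :
    (Ideal.span ({b * c} : Set R)).minimalPrimes =
      (Ideal.span {b}).minimalPrimes ∪ (Ideal.span {c}).minimalPrimes := by
  apply subset_antisymm
  · rintro p ⟨⟨hp, hle⟩, hmin⟩
    have hbc : b * c ∈ p := hle (Ideal.subset_span rfl)
    rcases hp.mem_or_mem hbc with h1 | h1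
    · left
      refine ⟨⟨hp, (Ideal.span_singleton_le_iff_mem _).mpr h1⟩, ?_⟩
      rintro q ⟨hq, hqle⟩ hqp
      have : b * c ∈ q := Ideal.mul_mem_right _ _ (hqle (Ideal.subset_span rfl))
      exact hmin ⟨hq, (Ideal.span_singleton_le_iff_mem _).mpr this⟩ hqp
    · right
      refine ⟨⟨hp, (Ideal.span_singleton_le_iff_mem _).mpr h1⟩, ?_⟩
      rintro q ⟨hq, hqle⟩ hqp
      have : b * c ∈ q := Ideal.mul_mem_left _ _ (hqle (Ideal.subset_span rfl))
      exact hmin ⟨hq, (Ideal.span_singleton_le_iff_mem _).mpr this⟩ hqp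
  · rintro p (hp | hp)
    · exact minP_subset_aux h hp
    · rw [mul_comm]
      exact minP_subset_aux (by rwa [sup_comm]) hp

lemma minP_disjoint {R : Type*} [CommRing R] {b c : R}
    (h : Ideal.span {b} ⊔ Ideal.span {c} = ⊤) :
    Disjoint (Ideal.span ({b} : Set R)).minimalPrimes (Ideal.span {c}).minimalPrimes := by
  rw [Set.disjoint_left]
  rintro p ⟨⟨hp, hb⟩, -⟩ ⟨⟨-, hc⟩, -⟩
  exact hp.ne_top (eq_top_iff.mpr (h ▸ sup_le hb hc))

lemma hccf_mul {R : Type*} [CommRing R] {b c : R}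
    (hb : HasCompleteComaximalFactorization b) (hc : HasCompleteComaximalFactorization c)
    (h : Ideal.span {b} ⊔ Ideal.span {c} = ⊤) :
    HasCompleteComaximalFactorization (b * c) := by
  obtain ⟨m, d, hd, hdp, hdc⟩ := hb
  obtain ⟨k, e, he, hep, hec⟩ := hc
  refine ⟨m + k, Fin.append d e, ?_, ?_, ?_⟩
  · rw [Fin.prod_univ_add]
    simp [Fin.append_left, Fin.append_right, ← hd, ← he]
  · intro i
    refine Fin.addCases (fun i => ?_) (fun i => ?_) i
    · simpa [Fin.append_left] using hdp i
    · simpa [Fin.append_right] using hep i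
  · have hdvd : ∀ i, Ideal.span ({b} : Set R) ≤ Ideal.span {d i} := fun i =>
      Ideal.span_singleton_le_span_singleton.mpr (hd ▸ Finset.dvd_prod_of_mem d (Finset.mem_univ i))
    have hedvd : ∀ j, Ideal.span ({c} : Set R) ≤ Ideal.span {e j} := fun j =>
      Ideal.span_singleton_le_span_singleton.mpr (he ▸ Finset.dvd_prod_of_mem e (Finset.mem_univ j))
    have mix : ∀ i j, Ideal.span {d i} + Ideal.span {e j} = ⊤ := by
      intro i j
      rw [Ideal.add_eq_sup, eq_top_iff, ← h]
      exact sup_le_sup (hdvd i) (hedvd j)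
    intro i j
    refine Fin.addCases (fun i => ?_) (fun i => ?_) i <;>
      refine Fin.addCases (fun j => ?_) (fun j => ?_) j <;> intro hij
    · simp only [Fin.append_left]
      exact hdc i j (fun e => hij (by rw [e]))
    · simp only [Fin.append_left, Fin.append_right]
      exact mix i j
    · simp only [Fin.append_left, Fin.append_right, Ideal.add_eq_sup, sup_comm] at mix ⊢
      exact mix j i
    · simp only [Fin.append_right]
      exact hec i j (fun e => hij (by rw [e]))

lemma nonempty_minP {R : Type*} [CommRing R] {I : Ideal R} (h : I ≠ ⊤) :
    I.minimalPrimes.Nonempty := by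
  obtain ⟨M, hM, hle⟩ := Ideal.exists_le_maximal I h
  have := hM.isPrime
  obtain ⟨p, hp, -⟩ := Ideal.exists_minimalPrimes_le hle
  exact ⟨p, hp⟩

theorem complete_comaximal_factorization_of_finitely_many_minimal_primes
    {R : Type*} [CommRing R] [IsDomain R]
    (hmin : ∀ x : R, x ≠ 0 → ¬IsUnit x → (Ideal.span {x}).minimalPrimes.Finite) :
    ∀ a : R, a ≠ 0 → ¬IsUnit a → HasCompleteComaximalFactorization a := by
  intro a ha hu
  generalize hn : (Ideal.span ({a} : Set R)).minimalPrimes.ncard = n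
  induction n using Nat.strong_induction_on generalizing a with
  | _ n ih =>
    by_cases hpi : PseudoIrreducible a
    · exact ⟨1, fun _ => a, by simp, fun _ => hpi, fun i j hij => absurd (Subsingleton.elim i j) hij⟩
    · simp only [PseudoIrreducible, ha, hu, not_false_iff, true_and, not_forall] at hpi
      push_neg at hpi
      obtain ⟨b, c, hbc, htop, hbu, hcu⟩ := hpi ha
      have hb0 : b ≠ 0 := fun h => ha (by simp [hbc, h])
      have hc0 : c ≠ 0 := fun h => ha (by simp [hbc, h])
      rw [Ideal.add_eq_sup] at htop
      have hsplit : (Ideal.span ({a} : Set R)).minimalPrimes =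
          (Ideal.span {b}).minimalPrimes ∪ (Ideal.span {c}).minimalPrimes := by
        rw [hbc]; exact minP_mul htop
      have hcard : n = (Ideal.span ({b} : Set R)).minimalPrimes.ncard +
          (Ideal.span ({c} : Set R)).minimalPrimes.ncard := by
        rw [← hn, hsplit]
        exact Set.ncard_union_eq (minP_disjoint htop) (hmin b hb0 hbu) (hmin c hc0 hcu)
      have hbne : 0 < (Ideal.span ({b} : Set R)).minimalPrimes.ncard := by
        rw [Set.ncard_pos (hmin b hb0 hbu)]
        exact nonempty_minP (by rwa [ne_eq, Ideal.span_singleton_eq_top])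
      have hcne : 0 < (Ideal.span ({c} : Set R)).minimalPrimes.ncard := by
        rw [Set.ncard_pos (hmin c hc0 hcu)]
        exact nonempty_minP (by rwa [ne_eq, Ideal.span_singleton_eq_top])
      have h1 := ih _ (by omega) b hb0 hbu rfl
      have h2 := ih _ (by omega) c hc0 hcu rfl
      rw [hbc]
      exact hccf_mul h1 h2 htop
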